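/- For s ≥ 2, the boxicity of TC(H_s), the transitive closure of the s-dimensional hypercube, is at least ⌈s/2⌉. -/

import Mathlib

/-- An interval graph: adjacency given by intersection of closed real intervals. -/
def IsIntervalGraph {V : Type*} (I : SimpleGraph V) : Prop :=
  ∃ a b : V → ℝ, ∀ u v : V,
    I.Adj u v ↔ u ≠ v ∧ (Set.Icc (a u) (b u) ∩ Set.Icc (a v) (b v)).Nonempty

/-- A unit interval graph: adjacency given by intersection of closed unit intervals. -/
def IsUnitIntervalGraph {V : Type*} (I : SimpleGraph V) : Prop :=
  ∃ a : V → ℝ, ∀ u v : V,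
    I.Adj u v ↔ u ≠ v ∧ (Set.Icc (a u) (a u + 1) ∩ Set.Icc (a v) (a v + 1)).Nonempty

/-- Boxicity: least `k` such that `G` is the intersection of `k` interval graphs. -/
noncomputable def boxicity {V : Type*} (G : SimpleGraph V) : ℕ :=
  sInf {k | ∃ I : Fin k → SimpleGraph V, (∀ i, IsIntervalGraph (I i)) ∧
    ∀ u v, G.Adj u v ↔ (u ≠ v ∧ ∀ i, (I i).Adj u v)}

/-- Cubicity: least `k` such that `G` is the intersection of `k` unit interval graphs. -/
noncomputable def cubicity {V : Type*} (G : SimpleGraph V) : ℕ :=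
  sInf {k | ∃ I : Fin k → SimpleGraph V, (∀ i, IsUnitIntervalGraph (I i)) ∧
    ∀ u v, G.Adj u v ↔ (u ≠ v ∧ ∀ i, (I i).Adj u v)}

/-- Transitive closure of the Cartesian product of complete graphs `K_{m i + 1}`. -/
def TCC {d : ℕ} (m : Fin d → ℕ) : SimpleGraph (∀ i, Fin (m i + 1)) where
  Adj x y := x ≠ y ∧ ((∀ i, (x i : ℕ) ≤ y i) ∨ (∀ i, (y i : ℕ) ≤ x i))
  symm := ⟨fun _ _ h => ⟨h.1.symm, h.2.symm⟩⟩
  loopless := ⟨fun _ h => h.1 rfl⟩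

/-- Transitive closure of the `s`-dimensional hypercube. -/
def TCH (s : ℕ) : SimpleGraph (∀ _ : Fin s, Fin 2) := TCC (fun _ => 1)

/- ## Auxiliary material -/

private def intervalGraphOf {V : Type*} (a b : V → ℝ) : SimpleGraph V where
  Adj u v := u ≠ v ∧ (Set.Icc (a u) (b u) ∩ Set.Icc (a v) (b v)).Nonempty
  symm := by
    constructor
    rintro u v ⟨h1, h2⟩
    exact ⟨h1.symm, by rwa [Set.inter_comm] at h2⟩
  loopless := ⟨fun v h => h.1 rfl⟩

private lemma intervalGraphOf_is {V : Type*} (a b : V → ℝ) :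
    IsIntervalGraph (intervalGraphOf a b) := ⟨a, b, fun _ _ => Iff.rfl⟩

private def mkSep {V : Type*} [DecidableEq V] (p q : V) : SimpleGraph V :=
  intervalGraphOf (fun w => if w = q then (2:ℝ) else 0) (fun w => if w = p then (1:ℝ) else 3)

private lemma boxicity_mem {V : Type*} [Fintype V] [DecidableEq V] (G : SimpleGraph V) :
    ∃ k, ∃ I : Fin k → SimpleGraph V, (∀ i, IsIntervalGraph (I i)) ∧
      ∀ u v, G.Adj u v ↔ (u ≠ v ∧ ∀ i, (I i).Adj u v) := by
  classical
  refine ⟨Fintype.card (V × V), fun i =>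
    (fun p : V × V => if G.Adj p.1 p.2 ∨ p.1 = p.2 then
        intervalGraphOf (fun _ => (0:ℝ)) (fun _ => 1) else mkSep p.1 p.2)
      ((Fintype.equivFin (V × V)).symm i), ?_, ?_⟩
  · intro i
    dsimp only
    split
    · exact intervalGraphOf_is _ _
    · exact intervalGraphOf_is _ _
  · intro u v
    constructor
    · intro huv
      refine ⟨G.ne_of_adj huv, fun i => ?_⟩
      dsimp only
      set p := (Fintype.equivFin (V × V)).symm i with hp
      split
      · exact ⟨G.ne_of_adj huv, 0, by norm_num, by norm_num⟩
      · rename_i hcond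
        push_neg at hcond
        refine ⟨G.ne_of_adj huv, ?_⟩
        have hne := G.ne_of_adj huv
        by_cases hu : u = p.2
        · have hv1 : v ≠ p.1 := by
            rintro rfl
            exact hcond.1 (hu ▸ huv.symm)
          have hv2 : v ≠ p.2 := fun h => hne (hu.trans h.symm)
          refine ⟨2, ?_, ?_⟩ <;>
            simp [mkSep, intervalGraphOf, Set.mem_Icc, hu, hv1, hv2, hcond.2, Ne.symm hcond.2] <;> norm_num
        · by_cases hv : v = p.2
          · have hu1 : u ≠ p.1 := by
              rintro rfl
              exact hcond.1 (hv ▸ huv)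
            refine ⟨2, ?_, ?_⟩ <;>
              simp [mkSep, intervalGraphOf, Set.mem_Icc, hu, hv, hu1, hcond.2, Ne.symm hcond.2] <;> norm_num
          · refine ⟨0, ?_, ?_⟩ <;>
              simp [mkSep, intervalGraphOf, Set.mem_Icc, hu, hv] <;> split <;> norm_num
    · rintro ⟨hne, hall⟩
      by_contra hna
      have hthis := hall ((Fintype.equivFin (V × V)) (u, v))
      dsimp only at hthis
      rw [Equiv.symm_apply_apply] at hthis
      rw [if_neg (by push_neg; exact ⟨hna, hne⟩)] at hthis
      obtain ⟨-, t, ht⟩ := hthis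
      simp [mkSep, intervalGraphOf, Set.mem_inter_iff, Set.mem_Icc, hne] at ht
      obtain ⟨⟨ht1, ht2⟩, ht3, -⟩ := ht
      linarith

private def ev (s : ℕ) (j : Fin s) : ∀ _ : Fin s, Fin 2 := fun i => if i = j then 1 else 0
private def fv (s : ℕ) (j : Fin s) : ∀ _ : Fin s, Fin 2 := fun i => if i = j then 0 else 1

private lemma ev_ne_fv (s : ℕ) (j : Fin s) : ev s j ≠ fv s j := by
  intro h
  have := congrFun h j
  simp [ev, fv] at this

private lemma not_adj_ef (s : ℕ) (hs : 2 ≤ s) (j : Fin s) :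
    ¬ (TCH s).Adj (ev s j) (fv s j) := by
  have hcard : 1 < Fintype.card (Fin s) := by simpa using by omega
  obtain ⟨l, hl⟩ := Fintype.exists_ne_of_one_lt_card hcard j
  rintro ⟨-, h | h⟩
  · have := h j
    simp [ev, fv] at this
  · have := h l
    simp [ev, fv, hl] at this

private lemma adj_ef (s : ℕ) (hs3 : 3 ≤ s) {j l : Fin s} (hjl : j ≠ l) :
    (TCH s).Adj (ev s j) (fv s l) := by
  have hm : ∃ m : Fin s, m ≠ j ∧ m ≠ l := by
    by_contra hcon
    push_neg at hcon
    have hsub : (Finset.univ : Finset (Fin s)) ⊆ {j, l} := by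
      intro m _
      by_cases hmj : m = j
      · simp [hmj]
      · simp [hcon m hmj]
    have := Finset.card_le_card hsub
    have h2 : ({j, l} : Finset (Fin s)).card ≤ 2 := Finset.card_insert_le _ _ |>.trans (by simp)
    simp [Finset.card_univ] at this
    omega
  obtain ⟨m, hmj, hml⟩ := hm
  refine ⟨?_, Or.inl ?_⟩
  · intro h
    have := congrFun h m
    simp [ev, fv, hmj, hml] at this
  · intro i
    by_cases h1 : i = j
    · subst h1
      simp [ev, fv, hjl]
    · by_cases h2 : i = l
      · subst h2
        simp [ev, fv, h1, hjl]
      · simp [ev, fv, h1, h2]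

theorem boxicity_TCH_lower (s : ℕ) (hs : 2 ≤ s) :
    (s + 1) / 2 ≤ boxicity (TCH s) := by
  classical
  unfold boxicity
  refine le_csInf ?_ ?_
  · obtain ⟨k, I, h1, h2⟩ := boxicity_mem (TCH s)
    exact ⟨k, I, h1, h2⟩
  rintro k ⟨I, hI, hiff⟩
  have hkill : ∀ j : Fin s, ∃ i : Fin k, ¬ (I i).Adj (ev s j) (fv s j) := by
    intro j
    have h1 := not_adj_ef s hs j
    rw [hiff] at h1
    push_neg at h1
    exact h1 (ev_ne_fv s j)
  choose kill hkillspec using hkill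
  by_cases hs3 : 3 ≤ s
  · -- main case
    have hfiber : ∀ i : Fin k,
        (Finset.univ.filter (fun j => kill j = i)).card ≤ 2 := by
      intro i
      by_contra hcard
      push_neg at hcard
      rw [Finset.two_lt_card_iff] at hcard
      obtain ⟨j1, j2, j3, hm1, hm2, hm3, h12, h13, h23⟩ := hcard
      simp only [Finset.mem_filter, Finset.mem_univ, true_and] at hm1 hm2 hm3
      obtain ⟨a, b, hab⟩ := hI i
      have hemp : ∀ {j : Fin s}, kill j = i →
          ¬ (Set.Icc (a (ev s j)) (b (ev s j)) ∩
              Set.Icc (a (fv s j)) (b (fv s j))).Nonempty := by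
        intro j hj hne
        have : (I i).Adj (ev s j) (fv s j) := (hab _ _).mpr ⟨ev_ne_fv s j, hne⟩
        exact hkillspec j (hj ▸ this)
      have hcross : ∀ {j l : Fin s}, j ≠ l →
          a (fv s l) ≤ b (ev s j) ∧ a (ev s j) ≤ b (fv s l) ∧
          a (ev s j) ≤ b (ev s j) ∧ a (fv s l) ≤ b (fv s l) := by
        intro j l hjl
        have hadj := ((hiff _ _).mp (adj_ef s hs3 hjl)).2 i
        rw [hab] at hadj
        obtain ⟨-, t, ht⟩ := hadj
        simp only [Set.mem_inter_iff, Set.mem_Icc] at ht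
        obtain ⟨⟨ht1, ht2⟩, ht3, ht4⟩ := ht
        exact ⟨le_trans ht3 ht2, le_trans ht1 ht4, le_trans ht1 ht2, le_trans ht3 ht4⟩
      have hor : ∀ {j l : Fin s}, kill j = i → j ≠ l →
          (b (ev s j) < a (fv s j) ∨ b (fv s j) < a (ev s j)) := by
        intro j l hj hjl
        by_contra hcon
        push_neg at hcon
        obtain ⟨h1, h2⟩ := hcon
        obtain ⟨-, -, he, -⟩ := hcross hjl
        obtain ⟨-, -, -, hf⟩ := hcross (Ne.symm hjl)
        exact hemp hj ⟨max (a (ev s j)) (a (fv s j)),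
          ⟨le_max_left _ _, max_le he h1⟩, ⟨le_max_right _ _, max_le h2 hf⟩⟩
      obtain ⟨c12a, c12b, -, -⟩ := hcross h12
      obtain ⟨c21a, c21b, -, -⟩ := hcross (Ne.symm h12)
      obtain ⟨c13a, c13b, -, -⟩ := hcross h13
      obtain ⟨c31a, c31b, -, -⟩ := hcross (Ne.symm h13)
      obtain ⟨c23a, c23b, -, -⟩ := hcross h23
      obtain ⟨c32a, c32b, -, -⟩ := hcross (Ne.symm h23)
      have ho1 := hor hm1 h12
      have ho2 := hor hm2 (Ne.symm h12)
      have ho3 := hor hm3 (Ne.symm h13)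
      rcases ho1 with h|h <;> rcases ho2 with h'|h' <;> rcases ho3 with h''|h'' <;> linarith
    have hcount : s ≤ 2 * k := by
      have h1 := Finset.card_eq_sum_card_fiberwise
        (f := kill) (s := (Finset.univ : Finset (Fin s)))
        (t := (Finset.univ : Finset (Fin k))) (fun x _ => Finset.mem_univ _)
      have h2 : ∑ i : Fin k, (Finset.univ.filter (fun j => kill j = i)).card
          ≤ ∑ _i : Fin k, 2 := Finset.sum_le_sum fun i _ => hfiber i
      simp only [Finset.card_univ, Fintype.card_fin, Finset.sum_const, smul_eq_mul] at h1 h2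
      omega
    omega
  · -- s = 2
    have hk0 : k ≠ 0 := by
      rintro rfl
      exact (kill ⟨0, by omega⟩).elim0
    omega
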